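/- Let $g_1, g_2$ be independent exponential random variables with means $\varepsilon_1, \varepsilon_2 > 0$. For positive constants $P_s, P_d, \sigma^2, \gamma_o$, $\Pr\left(\frac{P_s^2 g_1 g_2}{\sigma^2[P_s g_1 + (P_s + P_d) g_2 + \sigma^2]} < \gamma_o\right) = 1 - e^{-\frac{\gamma_o \sigma^2}{P_s}\left(\frac{P_s + P_d}{P_s \varepsilon_1} + \frac{1}{\varepsilon_2}\right)} \cdot \frac{2\gamma_o\sigma^2}{P_s}\sqrt{\frac{1}{\varepsilon_1\varepsilon_2}\left(\frac{P_s+P_d}{P_s} + \frac{1}{\gamma_o}\right)} \, K_1\left(\frac{2\gamma_o\sigma^2}{P_s}\sqrt{\frac{1}{\varepsilon_1\varepsilon_2}\left(\frac{P_s+P_d}{P_s} + \frac{1}{\gamma_o}\right)}\right)$. -/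

import Mathlib

open MeasureTheory ProbabilityTheory Set

noncomputable def besselK1 (x : ℝ) : ℝ :=
  ∫ t in Set.Ioi (0 : ℝ), Real.exp (-x * Real.cosh t) * Real.cosh t

lemma besselK1_nonneg (x : ℝ) : 0 ≤ besselK1 x := by
  apply setIntegral_nonneg measurableSet_Ioi
  intro t _
  positivity

lemma besselK1_eq_integral_real (z : ℝ) :
    ∫ t : ℝ, Real.exp (-(z * Real.cosh t)) * Real.cosh t = 2 * besselK1 z := by
  rw [besselK1, ← integral_comp_abs (f := fun t => Real.exp (-z * Real.cosh t) * Real.cosh t)]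
  congr 1
  ext t
  rw [Real.cosh_abs]
  ring_nf

lemma integral_exp_neg_add_div {p q : ℝ} (hp : 0 < p) (hq : 0 < q) :
    ∫ u in Set.Ioi (0:ℝ), Real.exp (-(p * u + q / u))
      = 2 * Real.sqrt (q / p) * besselK1 (2 * Real.sqrt (p * q)) := by
  set c := Real.sqrt (q / p) with hc_def
  have hc : 0 < c := Real.sqrt_pos.2 (div_pos hq hp)
  have hc2 : c ^ 2 = q / p := Real.sq_sqrt (div_pos hq hp).le
  set z := 2 * Real.sqrt (p * q) with hz_def
  have hpc : p * c = Real.sqrt (p * q) := by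
    have h1 : p * c = Real.sqrt (p ^ 2) * Real.sqrt (q / p) := by
      rw [Real.sqrt_sq hp.le]
    rw [h1, ← Real.sqrt_mul (sq_nonneg p)]
    congr 1
    field_simp
  have hqc : q / c = p * c := by
    have : q = p * c ^ 2 := by rw [hc2]; field_simp
    rw [this]
    field_simp
  have hz : 0 < z := by
    have : 0 < Real.sqrt (p * q) := Real.sqrt_pos.2 (mul_pos hp hq)
    positivity
  have himg : (fun t => c * Real.exp t) '' Set.univ = Set.Ioi 0 := by
    ext x
    simp only [Set.image_univ, Set.mem_range, Set.mem_Ioi]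
    constructor
    · rintro ⟨t, rfl⟩; positivity
    · intro hx
      exact ⟨Real.log (x / c), by rw [Real.exp_log (by positivity)]; field_simp⟩
  have hderiv : ∀ t ∈ Set.univ,
      HasDerivWithinAt (fun t => c * Real.exp t) (c * Real.exp t) Set.univ t :=
    fun t _ => ((Real.hasDerivAt_exp t).const_mul c).hasDerivWithinAt
  have hinj : Set.InjOn (fun t => c * Real.exp t) Set.univ := by
    intro a _ b _ h
    simpa [hc.ne', Real.exp_eq_exp] using h
  have key : ∀ t : ℝ, p * (c * Real.exp t) + q / (c * Real.exp t) = z * Real.cosh t := by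
    intro t
    have h1 : q / (c * Real.exp t) = (q / c) * Real.exp (-t) := by
      rw [Real.exp_neg]; field_simp
    rw [h1, hqc, Real.cosh_eq]
    have h2 : p * (c * Real.exp t) = (p * c) * Real.exp t := by ring
    rw [h2, hz_def, ← hpc]
    ring
  have heq : (fun t => |c * Real.exp t|
        • Real.exp (-(p * (c * Real.exp t) + q / (c * Real.exp t))))
      = fun t => c * (Real.exp t * Real.exp (-(z * Real.cosh t))) := by
    ext t
    rw [abs_of_pos (by positivity), key t, smul_eq_mul]
    ring
  have hsub := integral_image_eq_integral_abs_deriv_smul (MeasurableSet.univ)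
      hderiv hinj (fun u => Real.exp (-(p * u + q / u)))
  rw [himg] at hsub
  -- integrability on the image side
  have hint0 : IntegrableOn (fun u => Real.exp (-(p * u + q / u))) (Set.Ioi (0:ℝ)) := by
    apply Integrable.mono (exp_neg_integrableOn_Ioi 0 hp)
    · exact ((Real.measurable_exp.comp ((measurable_const.mul measurable_id').add
        (measurable_const.div measurable_id')).neg).aestronglyMeasurable)
    · filter_upwards [ae_restrict_mem measurableSet_Ioi] with u hu
      rw [Real.norm_eq_abs, Real.norm_eq_abs, abs_of_pos (Real.exp_pos _),
        abs_of_pos (Real.exp_pos _)]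
      apply Real.exp_le_exp.2
      have : 0 ≤ q / u := le_of_lt (div_pos hq hu)
      linarith
  have hint1 : Integrable (fun t => Real.exp t * Real.exp (-(z * Real.cosh t))) volume := by
    have h1 := (integrableOn_image_iff_integrableOn_abs_deriv_smul MeasurableSet.univ hderiv hinj
      (fun u => Real.exp (-(p * u + q / u)))).1 (by rwa [himg])
    rw [integrableOn_univ] at h1
    rw [heq] at h1
    exact (integrable_const_mul_iff (isUnit_iff_ne_zero.2 hc.ne') _).1 h1
  have he : MeasurableEmbedding (fun t : ℝ => -t) := (Homeomorph.neg ℝ).measurableEmbedding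
  have hint2 : Integrable (fun t : ℝ => Real.exp (-t) * Real.exp (-(z * Real.cosh t))) volume := by
    have h2 := ((Measure.measurePreserving_neg (volume : Measure ℝ)).integrable_comp_emb he).2 hint1
    simp only [Function.comp_def, Real.cosh_neg] at h2
    exact h2
  have hflip : (∫ t : ℝ, Real.exp (-t) * Real.exp (-(z * Real.cosh t)))
      = ∫ t : ℝ, Real.exp t * Real.exp (-(z * Real.cosh t)) := by
    have h3 := (Measure.measurePreserving_neg (volume : Measure ℝ)).integral_comp he
      (fun t => Real.exp t * Real.exp (-(z * Real.cosh t)))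
    simp only [Real.cosh_neg] at h3
    rw [← h3]
  have hJ : (∫ t : ℝ, Real.exp t * Real.exp (-(z * Real.cosh t))) = 2 * besselK1 z := by
    rw [← besselK1_eq_integral_real z]
    have h4 : (fun t : ℝ => Real.exp (-(z * Real.cosh t)) * Real.cosh t)
        = fun t : ℝ => (Real.exp t * Real.exp (-(z * Real.cosh t))
            + Real.exp (-t) * Real.exp (-(z * Real.cosh t))) / 2 := by
      ext t
      rw [Real.cosh_eq]
      ring
    rw [h4]
    rw [integral_div, integral_add hint1 hint2, hflip]
    ring
  rw [hsub, setIntegral_univ]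
  calc (∫ t, |c * Real.exp t| • Real.exp (-(p * (c * Real.exp t) + q / (c * Real.exp t))))
      = ∫ t, c * (Real.exp t * Real.exp (-(z * Real.cosh t))) := by rw [heq]
    _ = c * ∫ t, Real.exp t * Real.exp (-(z * Real.cosh t)) := integral_const_mul _ _
    _ = 2 * c * besselK1 z := by rw [hJ]; ring

lemma expMeasure_apply {r : ℝ} {s : Set ℝ} (hs : MeasurableSet s) :
    expMeasure r s = ∫⁻ x in s, exponentialPDF r x := by
  rw [expMeasure, gammaMeasure, withDensity_apply _ hs]
  rfl

lemma expMeasure_singleton {r c : ℝ} : expMeasure r {c} = 0 := by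
  rw [expMeasure_apply (measurableSet_singleton c)]
  exact setLIntegral_measure_zero _ _ Real.volume_singleton

lemma expMeasure_Iic_eq_Iio {r c : ℝ} : expMeasure r (Set.Iic c) = expMeasure r (Set.Iio c) := by
  apply le_antisymm
  · rw [show Set.Iic c = Set.Iio c ∪ {c} by ext x; simp [le_iff_lt_or_eq]]
    refine le_trans (measure_union_le _ _) ?_
    rw [expMeasure_singleton, add_zero]
  · exact measure_mono Iio_subset_Iic_self

lemma expMeasure_Iic_zero {r : ℝ} : expMeasure r (Set.Iic 0) = 0 := by
  rw [expMeasure_Iic_eq_Iio, expMeasure_apply measurableSet_Iio]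
  exact lintegral_exponentialPDF_of_nonpos le_rfl

lemma expMeasure_Ici {r c : ℝ} (hr : 0 < r) (hc : 0 ≤ c) :
    expMeasure r (Set.Ici c) = ENNReal.ofReal (Real.exp (-(r * c))) := by
  have hprob : IsProbabilityMeasure (expMeasure r) := isProbabilityMeasure_expMeasure hr
  have hexp1 : Real.exp (-(r * c)) ≤ 1 := Real.exp_le_one_iff.2 (by nlinarith)
  have hIio : expMeasure r (Set.Iio c) = ENNReal.ofReal (1 - Real.exp (-(r * c))) := by
    rw [← expMeasure_Iic_eq_Iio, expMeasure_apply measurableSet_Iic,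
      lintegral_exponentialPDF_eq_antiDeriv hr c, if_pos hc]
  rw [← compl_Iio, measure_compl measurableSet_Iio (measure_ne_top _ _), hIio, measure_univ]
  have h3 : ENNReal.ofReal (1 - Real.exp (-(r * c)))
      = 1 - ENNReal.ofReal (Real.exp (-(r * c))) := by
    rw [← ENNReal.ofReal_one, ← ENNReal.ofReal_sub _ (Real.exp_pos _).le]
  rw [h3, ENNReal.sub_sub_cancel ENNReal.one_ne_top
    (by simpa using ENNReal.ofReal_le_one.2 hexp1)]


lemma expMeasure_inter_Ioi {r : ℝ} (s : Set ℝ) :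
    expMeasure r s = expMeasure r (s ∩ Set.Ioi 0) := by
  apply le_antisymm
  · have hsub : s ⊆ (s ∩ Set.Ioi 0) ∪ Set.Iic 0 := by
      intro x hx
      by_cases h : 0 < x
      · exact Or.inl ⟨hx, h⟩
      · exact Or.inr (le_of_not_gt h)
    refine le_trans (measure_mono hsub) ?_
    refine le_trans (measure_union_le _ _) ?_
    rw [expMeasure_Iic_zero, add_zero]
  · exact measure_mono Set.inter_subset_left

set_option maxHeartbeats 1600000 in
theorem af_connection_outage_prob
    {Ω : Type*} [MeasurableSpace Ω] (μ : Measure Ω) [IsProbabilityMeasure μ]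
    (g1 g2 : Ω → ℝ) (hg1 : Measurable g1) (hg2 : Measurable g2)
    (ε1 ε2 : ℝ) (hε1 : 0 < ε1) (hε2 : 0 < ε2)
    (hlaw1 : Measure.map g1 μ = expMeasure (1 / ε1))
    (hlaw2 : Measure.map g2 μ = expMeasure (1 / ε2))
    (hindep : IndepFun g1 g2 μ)
    (Ps Pd σ2 γo : ℝ) (hPs : 0 < Ps) (hPd : 0 < Pd) (hσ : 0 < σ2) (hγo : 0 < γo) :
    (μ {ω | Ps^2 * g1 ω * g2 ω
        / (σ2 * (Ps * g1 ω + (Ps + Pd) * g2 ω + σ2)) < γo}).toReal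
      = 1 - Real.exp (-(γo * σ2 / Ps) * ((Ps + Pd) / (Ps * ε1) + 1 / ε2))
          * (2 * γo * σ2 / Ps
              * Real.sqrt (1 / (ε1 * ε2) * ((Ps + Pd) / Ps + 1 / γo)))
          * besselK1 (2 * γo * σ2 / Ps
              * Real.sqrt (1 / (ε1 * ε2) * ((Ps + Pd) / Ps + 1 / γo))) := by
  have hr1 : 0 < 1 / ε1 := by positivity
  have hr2 : 0 < 1 / ε2 := by positivity
  set r1 : ℝ := 1 / ε1 with hr1_def
  set r2 : ℝ := 1 / ε2 with hr2_def
  set b : ℝ := Ps + Pd with hb_def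
  have hbpos : 0 < b := by positivity
  set T : ℝ := γo * σ2 / Ps with hT_def
  have hT0 : 0 < T := by positivity
  set A : ℝ := γo * σ2 * b / Ps ^ 2 with hA_def
  set C : ℝ := γo * σ2 ^ 2 * (γo * b + Ps) / Ps ^ 3 with hC_def
  have hC0 : 0 < C := by positivity
  set hfun : ℝ → ℝ := fun y => γo * σ2 * (b * y + σ2) / (Ps ^ 2 * y - γo * σ2 * Ps)
    with hfun_def
  -- the event and its complement
  set E : Set Ω := {ω | Ps^2 * g1 ω * g2 ω
      / (σ2 * (Ps * g1 ω + b * g2 ω + σ2)) < γo} with hE_def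
  have hfmeas : Measurable fun ω => Ps^2 * g1 ω * g2 ω
      / (σ2 * (Ps * g1 ω + b * g2 ω + σ2)) := by
    apply Measurable.div
    · exact (measurable_const.mul hg1).mul hg2
    · exact measurable_const.mul (((measurable_const.mul hg1).add
        (measurable_const.mul hg2)).add measurable_const)
  have hEmeas : MeasurableSet E := measurableSet_lt hfmeas measurable_const
  -- the set in the product space, first coordinate y = g2, second x = g1
  set S : Set (ℝ × ℝ) := {p : ℝ × ℝ | γo ≤ Ps^2 * p.2 * p.1
      / (σ2 * (Ps * p.2 + b * p.1 + σ2))} with hS_def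
  have hSmeas : MeasurableSet S := by
    apply measurableSet_le measurable_const
    apply Measurable.div
    · exact (measurable_const.mul measurable_snd).mul measurable_fst
    · exact measurable_const.mul (((measurable_const.mul measurable_snd).add
        (measurable_const.mul measurable_fst)).add measurable_const)
  have hpair : Measurable fun ω => (g2 ω, g1 ω) := hg2.prodMk hg1
  have hpre : (fun ω => (g2 ω, g1 ω)) ⁻¹' S = Eᶜ := by
    ext ω
    simp only [hS_def, hE_def, Set.mem_preimage, Set.mem_setOf_eq, Set.mem_compl_iff, not_lt]
  have hmap : Measure.map (fun ω => (g2 ω, g1 ω)) μ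
      = (expMeasure r2).prod (expMeasure r1) := by
    rw [(indepFun_iff_map_prod_eq_prod_map_map hg2.aemeasurable hg1.aemeasurable).1 hindep.symm,
      hlaw1, hlaw2]
  have hprob1 : IsProbabilityMeasure (expMeasure r1) := isProbabilityMeasure_expMeasure hr1
  have hprob2 : IsProbabilityMeasure (expMeasure r2) := isProbabilityMeasure_expMeasure hr2
  have hcompl_meas : μ Eᶜ = ((expMeasure r2).prod (expMeasure r1)) S := by
    rw [← hpre, ← Measure.map_apply hpair hSmeas, hmap]
  -- slice analysis
  have hkey : ∀ y : ℝ, exponentialPDF r2 y * expMeasure r1 (Prod.mk y ⁻¹' S)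
      = (Set.Ioi T).indicator
          (fun y => ENNReal.ofReal (r2 * Real.exp (-(r2 * y)) * Real.exp (-(r1 * hfun y)))) y := by
    intro y
    rcases lt_or_ge y 0 with hy | hy
    · rw [exponentialPDF_of_neg hy, zero_mul,
        Set.indicator_of_notMem (by simp only [Set.mem_Ioi, not_lt]; linarith)]
    · by_cases hyT : T < y
      · have hy0 : 0 < y := lt_trans hT0 hyT
        have hden : 0 < Ps ^ 2 * y - γo * σ2 * Ps := by
          have : γo * σ2 / Ps < y := hyT
          have h1 : γo * σ2 < y * Ps := by
            rw [div_lt_iff₀ hPs] at this; linarith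
          nlinarith
        have hnum : 0 < γo * σ2 * (b * y + σ2) := by positivity
        have hh : 0 < hfun y := div_pos hnum hden
        have hslice : Prod.mk y ⁻¹' S ∩ Set.Ioi 0 = Set.Ici (hfun y) := by
          ext x
          simp only [hS_def, Set.mem_inter_iff, Set.mem_preimage, Set.mem_setOf_eq,
            Set.mem_Ioi, Set.mem_Ici]
          constructor
          · rintro ⟨hcond, hx⟩
            have hD : 0 < σ2 * (Ps * x + b * y + σ2) := by positivity
            rw [le_div_iff₀ hD] at hcond
            rw [hfun_def, div_le_iff₀ hden]
            nlinarith
          · intro hx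
            have hx0 : 0 < x := lt_of_lt_of_le hh hx
            have hD : 0 < σ2 * (Ps * x + b * y + σ2) := by positivity
            refine ⟨?_, hx0⟩
            rw [le_div_iff₀ hD]
            rw [hfun_def, div_le_iff₀ hden] at hx
            nlinarith
        rw [expMeasure_inter_Ioi, hslice, expMeasure_Ici hr1 hh.le,
          exponentialPDF_of_nonneg hy, Set.indicator_of_mem (Set.mem_Ioi.2 hyT),
          ← ENNReal.ofReal_mul (by positivity)]
      · -- 0 ≤ y ≤ T : slice is empty
        push_neg at hyT
        have hslice : Prod.mk y ⁻¹' S ∩ Set.Ioi 0 = (∅ : Set ℝ) := by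
          ext x
          simp only [hS_def, Set.mem_inter_iff, Set.mem_preimage, Set.mem_setOf_eq,
            Set.mem_Ioi, Set.mem_empty_iff_false, iff_false, not_and]
          intro hcond hx
          have hD : 0 < σ2 * (Ps * x + b * y + σ2) := by positivity
          rw [le_div_iff₀ hD] at hcond
          have hyT' : y ≤ γo * σ2 / Ps := hyT
          rw [le_div_iff₀ hPs] at hyT'
          nlinarith [mul_le_mul_of_nonneg_left hyT' (le_of_lt (mul_pos hPs hx)),
            mul_nonneg (mul_nonneg hγo.le hσ.le) (mul_nonneg hbpos.le hy),
            mul_pos (mul_pos hγo hσ) hσ]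
        rw [expMeasure_inter_Ioi, hslice, measure_empty, mul_zero,
          Set.indicator_of_notMem (by simp only [Set.mem_Ioi, not_lt]; exact hyT)]
  -- compute the product measure of S
  set F : ℝ → ℝ := fun y => r2 * Real.exp (-(r2 * y)) * Real.exp (-(r1 * hfun y)) with hF_def
  have hfun_meas : Measurable hfun := by
    apply Measurable.div
    · exact measurable_const.mul ((measurable_const.mul measurable_id').add measurable_const)
    · exact (measurable_const.mul measurable_id').sub measurable_const
  have hFmeas : Measurable F := by
    apply ((measurable_const.mul (Real.measurable_exp.comp
      (measurable_const.mul measurable_id').neg)).mul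
      (Real.measurable_exp.comp (measurable_const.mul hfun_meas).neg))
  have hFnonneg : ∀ y, 0 ≤ F y := fun y => by rw [hF_def]; positivity
  have hFint : IntegrableOn F (Set.Ioi T) := by
    apply Integrable.mono ((exp_neg_integrableOn_Ioi T hr2).const_mul r2)
    · exact hFmeas.aestronglyMeasurable
    · filter_upwards [ae_restrict_mem measurableSet_Ioi] with y hyT
      have hy0 : (0:ℝ) < y := lt_trans hT0 hyT
      have hden : 0 < Ps ^ 2 * y - γo * σ2 * Ps := by
        have h1 : γo * σ2 < y * Ps := by
          have := hyT; rw [Set.mem_Ioi, hT_def, div_lt_iff₀ hPs] at this; linarith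
        nlinarith
      have hh : 0 ≤ hfun y := le_of_lt (div_pos (by positivity) hden)
      rw [Real.norm_eq_abs, Real.norm_eq_abs, abs_of_nonneg (hFnonneg y),
        abs_of_nonneg (by positivity)]
      rw [hF_def]
      have hle : Real.exp (-(r1 * hfun y)) ≤ 1 := Real.exp_le_one_iff.2 (by nlinarith)
      calc r2 * Real.exp (-(r2 * y)) * Real.exp (-(r1 * hfun y))
          ≤ r2 * Real.exp (-(r2 * y)) * 1 := by
            apply mul_le_mul_of_nonneg_left hle (by positivity)
        _ = r2 * Real.exp (-r2 * y) := by rw [mul_one]; ring_nf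
  have hmeasure_S : ((expMeasure r2).prod (expMeasure r1)) S
      = ENNReal.ofReal (∫ y in Set.Ioi T, F y) := by
    rw [Measure.prod_apply hSmeas]
    have hslice_meas : Measurable fun y => expMeasure r1 (Prod.mk y ⁻¹' S) :=
      measurable_measure_prodMk_left hSmeas
    have hpdf_meas : Measurable (exponentialPDF r2) :=
      (measurable_exponentialPDFReal r2).ennreal_ofReal
    rw [show expMeasure r2 = volume.withDensity (exponentialPDF r2) from rfl]
    rw [lintegral_withDensity_eq_lintegral_mul volume hpdf_meas hslice_meas]
    have : ∀ y, (exponentialPDF r2 * fun y => expMeasure r1 (Prod.mk y ⁻¹' S)) y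
        = (Set.Ioi T).indicator (fun y => ENNReal.ofReal (F y)) y := fun y => hkey y
    rw [lintegral_congr this, lintegral_indicator measurableSet_Ioi _,
      ← ofReal_integral_eq_lintegral_ofReal hFint
        (Filter.Eventually.of_forall fun y => hFnonneg y)]
  -- evaluate the real integral
  have htrans : ∫ y in Set.Ioi T, F y = ∫ u in Set.Ioi (0:ℝ), F (u + T) := by
    rw [← integral_indicator measurableSet_Ioi, ← integral_indicator measurableSet_Ioi]
    rw [← integral_add_right_eq_self (Set.Ioi T |>.indicator F) T]
    congr 1
    ext u
    by_cases hu : (0:ℝ) < u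
    · rw [Set.indicator_of_mem (by simp [hu] : u + T ∈ Set.Ioi T),
        Set.indicator_of_mem (Set.mem_Ioi.2 hu)]
    · rw [Set.indicator_of_notMem (by simp [hu] : u + T ∉ Set.Ioi T),
        Set.indicator_of_notMem (by simpa using hu)]
  have hFshift : ∀ u ∈ Set.Ioi (0:ℝ),
      F (u + T) = (r2 * Real.exp (-(r2 * T + r1 * A)))
        * Real.exp (-(r2 * u + (r1 * C) / u)) := by
    intro u hu
    rw [Set.mem_Ioi] at hu
    have hu' : u ≠ 0 := ne_of_gt hu
    have hfun_shift : hfun (u + T) = A + C / u := by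
      simp only [hfun_def, hT_def, hA_def, hC_def]
      have hden : Ps ^ 2 * (u + γo * σ2 / Ps) - γo * σ2 * Ps = Ps ^ 2 * u := by
        field_simp; ring
      rw [hden]
      field_simp
      ring
    have e1 : F (u + T) = r2 * Real.exp ((-(r2 * T + r1 * A)) + (-(r2 * u + (r1 * C) / u))) := by
      simp only [hF_def, hfun_shift]
      rw [mul_assoc, ← Real.exp_add]
      congr 1
      ring
    rw [e1, Real.exp_add]
    ring
  have hIval : ∫ u in Set.Ioi (0:ℝ), F (u + T)
      = (r2 * Real.exp (-(r2 * T + r1 * A)))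
        * (2 * Real.sqrt ((r1 * C) / r2) * besselK1 (2 * Real.sqrt (r2 * (r1 * C)))) := by
    rw [setIntegral_congr_fun measurableSet_Ioi hFshift, integral_const_mul,
      integral_exp_neg_add_div hr2 (by positivity)]
  -- algebraic identification with the target expression
  set R : ℝ := Real.exp (-(γo * σ2 / Ps) * (b / (Ps * ε1) + 1 / ε2))
      * (2 * γo * σ2 / Ps * Real.sqrt (1 / (ε1 * ε2) * (b / Ps + 1 / γo)))
      * besselK1 (2 * γo * σ2 / Ps * Real.sqrt (1 / (ε1 * ε2) * (b / Ps + 1 / γo)))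
    with hR_def
  have harg : 2 * Real.sqrt (r2 * (r1 * C))
      = 2 * γo * σ2 / Ps * Real.sqrt (1 / (ε1 * ε2) * (b / Ps + 1 / γo)) := by
    have h1 : r2 * (r1 * C) = (γo * σ2 / Ps) ^ 2 * (1 / (ε1 * ε2) * (b / Ps + 1 / γo)) := by
      simp only [hr1_def, hr2_def, hC_def]
      field_simp
    rw [h1, Real.sqrt_mul (sq_nonneg _), Real.sqrt_sq (by positivity)]
    ring
  have hcoef : r2 * (2 * Real.sqrt ((r1 * C) / r2)) = 2 * Real.sqrt (r2 * (r1 * C)) := by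
    have h2 : r2 * Real.sqrt ((r1 * C) / r2) = Real.sqrt (r2 ^ 2) * Real.sqrt ((r1 * C) / r2) := by
      rw [Real.sqrt_sq hr2.le]
    rw [mul_comm (2:ℝ), ← mul_assoc, h2, ← Real.sqrt_mul (sq_nonneg _)]
    have h3 : r2 ^ 2 * ((r1 * C) / r2) = r2 * (r1 * C) := by
      field_simp
    rw [h3, mul_comm]
  have hexp : (-(r2 * T + r1 * A)) = -(γo * σ2 / Ps) * (b / (Ps * ε1) + 1 / ε2) := by
    simp only [hr1_def, hr2_def, hT_def, hA_def]
    field_simp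
    ring
  have hI_eq : ∫ y in Set.Ioi T, F y = R := by
    rw [htrans, hIval, hR_def, hexp.symm, ← harg]
    rw [← hcoef]
    ring
  have hR_nonneg : 0 ≤ R := by
    rw [hR_def]
    have := besselK1_nonneg (2 * γo * σ2 / Ps * Real.sqrt (1 / (ε1 * ε2) * (b / Ps + 1 / γo)))
    have hs := Real.sqrt_nonneg (1 / (ε1 * ε2) * (b / Ps + 1 / γo))
    positivity
  have hle1 : ENNReal.ofReal R ≤ 1 := by
    have h := prob_le_one (μ := μ) (s := Eᶜ)
    rwa [hcompl_meas, hmeasure_S, hI_eq] at h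
  have hE' : μ E = 1 - ENNReal.ofReal R := by
    rw [← compl_compl E, prob_compl_eq_one_sub hEmeas.compl, hcompl_meas, hmeasure_S, hI_eq]
  rw [hE', ENNReal.toReal_sub_of_le hle1 ENNReal.one_ne_top, ENNReal.toReal_one,
    ENNReal.toReal_ofReal hR_nonneg, hR_def]
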